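/- Let A ∈ ℝ^{p×T}, B ∈ ℝ^{q×T} with [A; B] of full row rank p+q. Then the matrix I_p − A (B)† B A† is invertible, and D₁ := (I_T − B†B) A† (I_p − A B† B A†)⁻¹ satisfies A D₁ = I_p and B D₁ = 0. -/

import Mathlib

open Matrix

noncomputable def rpinv {m n : Type} [Fintype m] [Fintype n] [DecidableEq m]
    (A : Matrix m n ℝ) : Matrix n m ℝ := Aᵀ * (A * Aᵀ)⁻¹

lemma aux_isUnit_mul_transpose {k T : ℕ} (M : Matrix (Fin k) (Fin T) ℝ)
    (h : ∀ x : Fin k → ℝ, x ᵥ* M = 0 → x = 0) : IsUnit (M * Mᵀ) := by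
  rw [← Matrix.vecMul_injective_iff_isUnit]
  have key : ∀ x : Fin k → ℝ, x ᵥ* (M * Mᵀ) = 0 → x = 0 := by
    intro x hx
    apply h
    have h1 : (x ᵥ* M) ⬝ᵥ (x ᵥ* M) = 0 := by
      calc (x ᵥ* M) ⬝ᵥ (x ᵥ* M) = (x ᵥ* M) ⬝ᵥ (Mᵀ *ᵥ x) := by rw [Matrix.mulVec_transpose]
        _ = ((x ᵥ* M) ᵥ* Mᵀ) ⬝ᵥ x := by rw [Matrix.dotProduct_mulVec]
        _ = (x ᵥ* (M * Mᵀ)) ⬝ᵥ x := by rw [Matrix.vecMul_vecMul]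
        _ = 0 := by rw [hx, zero_dotProduct]
    exact dotProduct_self_eq_zero.mp h1
  intro x y hxy
  have h0 : (x - y) ᵥ* (M * Mᵀ) = 0 := by
    rw [Matrix.sub_vecMul]
    exact sub_eq_zero.mpr hxy
  exact sub_eq_zero.mp (key _ h0)


/-- Explicit formula for the first block of `[A;B]†`: if `[A;B]` has full row rank,
then `I − A B† B A†` is invertible and
`D₁ = (I − B†B) A† (I − A B† B A†)⁻¹` satisfies `A D₁ = I` and `B D₁ = 0`. -/
theorem stmt16 (p q T : ℕ)
    (A : Matrix (Fin p) (Fin T) ℝ) (B : Matrix (Fin q) (Fin T) ℝ)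
    (hrank : (Matrix.fromRows A B).rank = p + q) :
    IsUnit (1 - A * rpinv B * B * rpinv A) ∧
    A * ((1 - rpinv B * B) * rpinv A * (1 - A * rpinv B * B * rpinv A)⁻¹) = 1 ∧
    B * ((1 - rpinv B * B) * rpinv A * (1 - A * rpinv B * B * rpinv A)⁻¹) = 0 := by
  -- rows of [A;B] are linearly independent
  have hli : LinearIndependent ℝ (fun i => Matrix.fromRows A B i) := by
    rw [linearIndependent_iff_card_eq_finrank_span]
    rw [Set.finrank, show (fun i => Matrix.fromRows A B i) = (Matrix.fromRows A B).row from rfl,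
      ← Matrix.rank_eq_finrank_span_row, hrank]
    simp
  have hinj := Matrix.vecMul_injective_iff.mpr hli
  have hkey : ∀ (x : Fin p → ℝ) (y : Fin q → ℝ), x ᵥ* A + y ᵥ* B = 0 → x = 0 ∧ y = 0 := by
    intro x y hxy
    have h1 : (Sum.elim x y) ᵥ* Matrix.fromRows A B
        = (Sum.elim (0 : Fin p → ℝ) (0 : Fin q → ℝ)) ᵥ* Matrix.fromRows A B := by
      rw [Matrix.sumElim_vecMul_fromRows, Matrix.sumElim_vecMul_fromRows, hxy]
      simp
    have h2 := hinj h1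
    exact ⟨funext fun i => congr_fun h2 (Sum.inl i), funext fun i => congr_fun h2 (Sum.inr i)⟩
  have hA0 : ∀ x : Fin p → ℝ, x ᵥ* A = 0 → x = 0 := fun x hx =>
    (hkey x 0 (by rw [hx, Matrix.zero_vecMul, add_zero])).1
  have hB0 : ∀ y : Fin q → ℝ, y ᵥ* B = 0 → y = 0 := fun y hy =>
    (hkey 0 y (by rw [hy, Matrix.zero_vecMul, add_zero])).2
  have hAu : IsUnit (A * Aᵀ) := aux_isUnit_mul_transpose A hA0
  have hBu : IsUnit (B * Bᵀ) := aux_isUnit_mul_transpose B hB0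
  have hAr : A * rpinv A = 1 := by
    rw [rpinv, ← Matrix.mul_assoc, Matrix.mul_nonsing_inv _ ((Matrix.isUnit_iff_isUnit_det _).mp hAu)]
  have hBr : B * rpinv B = 1 := by
    rw [rpinv, ← Matrix.mul_assoc, Matrix.mul_nonsing_inv _ ((Matrix.isUnit_iff_isUnit_det _).mp hBu)]
  set Q : Matrix (Fin T) (Fin T) ℝ := rpinv B * B with hQ
  have hQt : Qᵀ = Q := by
    rw [hQ, rpinv, Matrix.transpose_mul, Matrix.transpose_mul, Matrix.transpose_nonsing_inv,
      Matrix.transpose_mul, Matrix.transpose_transpose, Matrix.mul_assoc]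
  have hQQ : Q * Q = Q := by
    rw [hQ, Matrix.mul_assoc, ← Matrix.mul_assoc B, hBr, Matrix.one_mul]
  set C : Matrix (Fin p) (Fin T) ℝ := A * (1 - Q) with hC
  have hC0 : ∀ x : Fin p → ℝ, x ᵥ* C = 0 → x = 0 := by
    intro x hx
    refine (hkey x (-(x ᵥ* (A * rpinv B))) ?_).1
    have hsplit : x ᵥ* C = x ᵥ* A - (x ᵥ* (A * rpinv B)) ᵥ* B := by
      rw [hC, ← Matrix.vecMul_vecMul, Matrix.vecMul_sub, Matrix.vecMul_one, hQ,
        Matrix.vecMul_vecMul, Matrix.vecMul_vecMul, Matrix.mul_assoc]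
    rw [Matrix.neg_vecMul, ← sub_eq_add_neg, ← hsplit, hx]
  have hCu : IsUnit (C * Cᵀ) := aux_isUnit_mul_transpose C hC0
  have hproj : (1 - Q) * (1 - Q) = 1 - Q := by
    rw [Matrix.sub_mul, Matrix.one_mul, Matrix.mul_sub, Matrix.mul_one, hQQ]
    abel
  have hCCt : C * Cᵀ = A * (1 - Q) * Aᵀ := by
    rw [hC, Matrix.transpose_mul, Matrix.transpose_sub, Matrix.transpose_one, hQt,
      Matrix.mul_assoc, ← Matrix.mul_assoc (1 - Q), hproj, ← Matrix.mul_assoc]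
  set M : Matrix (Fin p) (Fin p) ℝ := 1 - A * rpinv B * B * rpinv A with hM
  have hMeq : M = A * (1 - Q) * rpinv A := by
    rw [hM, Matrix.mul_sub, Matrix.mul_one, Matrix.sub_mul, hAr, hQ,
      Matrix.mul_assoc A (rpinv B) B, ← Matrix.mul_assoc]
  have hMu : IsUnit M := by
    have : M = C * Cᵀ * (A * Aᵀ)⁻¹ := by
      rw [hCCt, hMeq, rpinv, Matrix.mul_assoc, Matrix.mul_assoc, Matrix.mul_assoc]
    rw [this]
    exact hCu.mul (Matrix.isUnit_nonsing_inv_iff.mpr hAu)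
  refine ⟨hMu, ?_, ?_⟩
  · rw [← Matrix.mul_assoc, ← Matrix.mul_assoc, ← hMeq,
      Matrix.mul_nonsing_inv _ ((Matrix.isUnit_iff_isUnit_det _).mp hMu)]
  · rw [← Matrix.mul_assoc, ← Matrix.mul_assoc, Matrix.mul_sub, Matrix.mul_one, hQ,
      ← Matrix.mul_assoc, hBr, Matrix.one_mul, sub_self, Matrix.zero_mul, Matrix.zero_mul]
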